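/- For s ∈ (0, 1/2) and Z ≥ 1, the series Σ_{k≥1} 1/(k^2 (1+k^2+Z^2)^s) is comparable to Z^{-2s}: there exist C1, C2 > 0 depending only on s with C1 Z^{-2s} ≤ Σ_{k≥1} 1/(k^2(1+k^2+Z^2)^s) ≤ C2 Z^{-2s}. -/

import Mathlib

theorem stmt_10 (s : ℝ) (hs : s ∈ Set.Ioo (0:ℝ) (1/2)) :
    ∃ C1 > 0, ∃ C2 > 0, ∀ Z : ℝ, 1 ≤ Z →
      C1 * Z ^ (-2*s) ≤ (∑' k : ℕ, 1 / ((k+1:ℝ)^2 * (1 + (k+1:ℝ)^2 + Z^2) ^ s)) ∧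
      (∑' k : ℕ, 1 / ((k+1:ℝ)^2 * (1 + (k+1:ℝ)^2 + Z^2) ^ s)) ≤ C2 * Z ^ (-2*s) := by
  obtain ⟨hs0, hs1⟩ := hs
  have hgsum : Summable (fun k : ℕ => 1 / ((k:ℝ)+1)^2) := by
    have h := (summable_nat_add_iff 1).2 (Real.summable_one_div_nat_pow.2 one_lt_two)
    exact_mod_cast h
  set C2 : ℝ := ∑' k : ℕ, 1 / ((k:ℝ)+1)^2 with hC2
  have hC2pos : 0 < C2 := by
    have h0 : (0:ℝ) < 1 / (((0:ℕ):ℝ)+1)^2 := by norm_num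
    exact lt_of_lt_of_le h0 (hgsum.le_tsum 0 (fun j _ => by positivity))
  refine ⟨(3:ℝ)^(-s), Real.rpow_pos_of_pos (by norm_num) _, C2, hC2pos, fun Z hZ => ?_⟩
  have hZ0 : (0:ℝ) < Z := lt_of_lt_of_le one_pos hZ
  have hZ2 : (0:ℝ) < Z^2 := by positivity
  have hpow : Z ^ (-2*s) = (Z^2) ^ (-s) := by
    rw [← Real.rpow_natCast Z 2, ← Real.rpow_mul hZ0.le]
    norm_num
  have hterm : ∀ k : ℕ, 1 / ((k+1:ℝ)^2 * (1 + (k+1:ℝ)^2 + Z^2) ^ s)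
      ≤ Z ^ (-2*s) * (1 / ((k:ℝ)+1)^2) := by
    intro k
    have hbase : (0:ℝ) < 1 + (k+1:ℝ)^2 + Z^2 := by positivity
    have h1 : (Z^2:ℝ) ^ s ≤ (1 + (k+1:ℝ)^2 + Z^2) ^ s := by
      apply Real.rpow_le_rpow hZ2.le _ hs0.le
      nlinarith [sq_nonneg ((k:ℝ)+1)]
    have h2 : (0:ℝ) < (Z^2:ℝ) ^ s := Real.rpow_pos_of_pos hZ2 _
    rw [hpow, Real.rpow_neg hZ2.le]
    have : 1 / ((1 + (k+1:ℝ)^2 + Z^2) ^ s) ≤ 1 / ((Z^2:ℝ) ^ s) :=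
      one_div_le_one_div_of_le h2 h1
    calc 1 / ((k+1:ℝ)^2 * (1 + (k+1:ℝ)^2 + Z^2) ^ s)
        = (1 / ((k+1:ℝ)^2)) * (1 / ((1 + (k+1:ℝ)^2 + Z^2) ^ s)) := by
          rw [div_mul_div_comm]; norm_num
      _ ≤ (1 / ((k+1:ℝ)^2)) * (1 / ((Z^2:ℝ) ^ s)) := by
          apply mul_le_mul_of_nonneg_left this (by positivity)
      _ = ((Z^2:ℝ) ^ s)⁻¹ * (1 / ((k:ℝ)+1)^2) := by
          push_cast; rw [mul_comm]; rw [one_div]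
  have hfsum : Summable (fun k : ℕ => 1 / ((k+1:ℝ)^2 * (1 + (k+1:ℝ)^2 + Z^2) ^ s)) := by
    apply Summable.of_nonneg_of_le (fun k => by positivity) hterm
    exact hgsum.mul_left _
  constructor
  · have hfirst : (3:ℝ)^(-s) * Z ^ (-2*s) ≤ 1 / ((0+1:ℝ)^2 * (1 + (0+1:ℝ)^2 + Z^2) ^ s) := by
      have h32 : (2:ℝ) + Z^2 ≤ 3 * Z^2 := by nlinarith
      have hb : (0:ℝ) < 2 + Z^2 := by positivity
      have h1 : ((2:ℝ) + Z^2) ^ s ≤ (3 * Z^2) ^ s := Real.rpow_le_rpow hb.le h32 hs0.le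
      have h2 : (3 * Z^2 : ℝ) ^ (-s) ≤ ((2:ℝ) + Z^2) ^ (-s) := by
        rw [Real.rpow_neg hb.le, Real.rpow_neg (by positivity)]
        exact inv_anti₀ (Real.rpow_pos_of_pos hb _) h1
      have h3 : (3 * Z^2 : ℝ) ^ (-s) = (3:ℝ)^(-s) * Z ^ (-2*s) := by
        rw [Real.mul_rpow (by norm_num) hZ2.le, hpow]
      have h4 : 1 / ((0+1:ℝ)^2 * (1 + (0+1:ℝ)^2 + Z^2) ^ s) = ((2:ℝ) + Z^2) ^ (-s) := by
        rw [Real.rpow_neg hb.le]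
        norm_num
      rw [h4, ← h3]; exact h2
    have hle := hfsum.le_tsum 0 (fun j _ => by positivity)
    rw [Nat.cast_zero] at hle
    exact hfirst.trans hle
  · calc (∑' k : ℕ, 1 / ((k+1:ℝ)^2 * (1 + (k+1:ℝ)^2 + Z^2) ^ s))
        ≤ ∑' k : ℕ, Z ^ (-2*s) * (1 / ((k:ℝ)+1)^2) :=
          Summable.tsum_le_tsum hterm hfsum (hgsum.mul_left _)
      _ = Z ^ (-2*s) * C2 := by rw [tsum_mul_left]
      _ = C2 * Z ^ (-2*s) := mul_comm _ _
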